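/- (The paper's Lemma 4.2: the zeroth-coordinate map is a strong projection from the amalgamation onto the blowup.) Assume additionally that q ⊓ p ∈ P whenever p ∈ P, q ∈ Q and ⊥ ≠ q ≤ π(p), and that R(q ⊓ p, q) whenever p ∈ P, q ∈ Q ∩ P, ⊥ ≠ q ≤ π(p) and R(p, π(p)). Then for every p̄ ∈ P^ℤ_f and every ŵ ∈ P̂ with ŵ ≤ p̄(0), there exists w̄ ∈ P^ℤ_f such that w̄(0) = ŵ, w̄ ≤ p̄, w̄ ≤ e(ŵ), and every r̄ ∈ P^ℤ_f with r̄ ≤ p̄ and r̄ ≤ e(ŵ) satisfies r̄ ≤ w̄; that is, the meet e(ŵ)·p̄ exists in P^ℤ_f and its zeroth coordinate is ŵ. -/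

import Mathlib

namespace Stmt7

variable {B : Type*} [CompleteBooleanAlgebra B]

/-- `A` is a complete subalgebra of the complete Boolean algebra `B`. -/
def IsCompleteSubalgebra (A : Set B) : Prop :=
  ⊤ ∈ A ∧ (∀ a ∈ A, aᶜ ∈ A) ∧ ∀ S ⊆ A, sSup S ∈ A

/-- The canonical projection onto `A`. -/
def proj (A : Set B) (b : B) : B := sInf {a | a ∈ A ∧ b ≤ a}

/-- The meet `m(p̂) = p ⊓ b₀ ⊓ b₁` of the components of a triple. -/
def bm (t : B × B × B) : B := t.1 ⊓ t.2.1 ⊓ t.2.2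

/-- The ordering of the blowup: `p̂ ≤ q̂` iff `p̂^P ≤ q̂^P` and `m(p̂) ≤ m(q̂)`. -/
def bLE (t s : B × B × B) : Prop := t.1 ≤ s.1 ∧ bm t ≤ bm s

/-- The amalgamation setting of the paper: complete subalgebras `Q ⊆ B₀ ∩ B₁`
of `B`, a set `P` of nonzero elements of `B`, an isomorphism `f : B₀ → B₁`
fixing `Q` pointwise and commuting with the projection to `Q`, and a binary
relation `R` on `P` (playing the role of `≤ᵒ^{λ₀}` to `Q`-parts) such that
`π(p) ∈ P` and `R(π(p), π(p))` for every `p ∈ P`. -/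
structure Setting (B : Type*) [CompleteBooleanAlgebra B] where
  Q : Set B
  B0 : Set B
  B1 : Set B
  P : Set B
  R : B → B → Prop
  hQ : IsCompleteSubalgebra Q
  hB0 : IsCompleteSubalgebra B0
  hB1 : IsCompleteSubalgebra B1
  hQB0 : Q ⊆ B0
  hQB1 : Q ⊆ B1
  hPne : ∀ p ∈ P, p ≠ ⊥
  f : B → B
  finv : B → B
  f_mem : ∀ b ∈ B0, f b ∈ B1
  finv_mem : ∀ b ∈ B1, finv b ∈ B0
  finv_f : ∀ b ∈ B0, finv (f b) = b
  f_finv : ∀ b ∈ B1, f (finv b) = b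
  f_inf : ∀ a ∈ B0, ∀ b ∈ B0, f (a ⊓ b) = f a ⊓ f b
  f_sup : ∀ a ∈ B0, ∀ b ∈ B0, f (a ⊔ b) = f a ⊔ f b
  f_compl : ∀ a ∈ B0, f aᶜ = (f a)ᶜ
  f_fixQ : ∀ q ∈ Q, f q = q
  f_proj : ∀ b ∈ B0, proj Q (f b) = proj Q b
  R_proj_mem : ∀ p ∈ P, proj Q p ∈ P
  R_proj_refl : ∀ p ∈ P, R (proj Q p) (proj Q p)

/-- `F(x) = f(π₀(x))`. -/
def Setting.F (S : Setting B) (x : B) : B := S.f (proj S.B0 x)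

/-- `G(x) = f⁻¹(π₁(x))`. -/
def Setting.G (S : Setting B) (x : B) : B := S.finv (proj S.B1 x)

/-- Membership in the blowup `P̂`. -/
def Setting.InBlowup (S : Setting B) (t : B × B × B) : Prop :=
  t.1 ∈ S.P ∧ t.2.1 ∈ S.B0 ∧ t.2.2 ∈ S.B1 ∧ proj S.Q (bm t) = proj S.Q t.1

/-- Membership in the amalgamation `P^ℤ_f`: each coordinate is in the blowup,
the linking equations hold, and `R(p̄(k)^P, π(p̄(k)^P))` for all but finitely
many `k`. -/
def Setting.InAmalg (S : Setting B) (pb : ℤ → B × B × B) : Prop :=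
  (∀ k : ℤ, S.InBlowup (pb k)) ∧
  (∀ k : ℤ, S.f (proj S.B0 (bm (pb k))) = proj S.B1 (bm (pb (k + 1)))) ∧
  {k : ℤ | ¬ S.R (pb k).1 (proj S.Q (pb k).1)}.Finite

/-- The coordinatewise ordering of the amalgamation. -/
def amLE (pb qb : ℤ → B × B × B) : Prop := ∀ k : ℤ, bLE (pb k) (qb k)

/-- The embedding `e : P̂ → P^ℤ_f`. -/
def Setting.e (S : Setting B) (u : B × B × B) : ℤ → B × B × B := fun i =>
  if i = 0 then u
  else if 0 < i then (proj S.Q u.1, ⊤, (S.F)^[i.toNat] (bm u))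
  else (proj S.Q u.1, (S.G)^[(-i).toNat] (bm u), ⊤)

namespace IsCompleteSubalgebra
variable {A : Set B}

lemma sInf_mem (hA : IsCompleteSubalgebra A) {T : Set B} (h : T ⊆ A) : sInf T ∈ A := by
  have e : sInf T = (sSup ((·ᶜ) '' T))ᶜ := by
    rw [sSup_image, ← compl_sInf, compl_compl]
  rw [e]
  exact hA.2.1 _ (hA.2.2 _ (by rintro x ⟨a, ha, rfl⟩; exact hA.2.1 a (h ha)))

lemma inf_mem (hA : IsCompleteSubalgebra A) {a b : B} (ha : a ∈ A) (hb : b ∈ A) :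
    a ⊓ b ∈ A := by
  rw [← sInf_pair]; exact hA.sInf_mem (by rintro x (rfl | rfl) <;> assumption)

lemma sup_mem (hA : IsCompleteSubalgebra A) {a b : B} (ha : a ∈ A) (hb : b ∈ A) :
    a ⊔ b ∈ A := by
  rw [← sSup_pair]; exact hA.2.2 _ (by rintro x (rfl | rfl) <;> assumption)

lemma proj_mem (hA : IsCompleteSubalgebra A) (b : B) : proj A b ∈ A :=
  hA.sInf_mem (fun a ha => ha.1)

end IsCompleteSubalgebra

lemma le_proj (A : Set B) (b : B) : b ≤ proj A b := le_sInf (fun _ ha => ha.2)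

lemma proj_le {A : Set B} {a b : B} (haA : a ∈ A) (h : b ≤ a) : proj A b ≤ a :=
  sInf_le ⟨haA, h⟩

lemma proj_mono {A : Set B} {b c : B} (h : b ≤ c) : proj A b ≤ proj A c :=
  le_sInf (fun a ha => sInf_le ⟨ha.1, h.trans ha.2⟩)

lemma proj_of_mem {A : Set B} {a : B} (haA : a ∈ A) : proj A a = a :=
  le_antisymm (proj_le haA le_rfl) (le_proj A a)

lemma proj_inf (hA : IsCompleteSubalgebra A) {a : B} (haA : a ∈ A) (x : B) :
    proj A (x ⊓ a) = proj A x ⊓ a := by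
  apply le_antisymm
  · exact le_inf (proj_mono inf_le_left) (proj_le haA inf_le_right)
  · have h1 : x ≤ aᶜ ⊔ proj A (x ⊓ a) := by
      calc x = (x ⊓ aᶜ) ⊔ (x ⊓ a) := by rw [← inf_sup_left, compl_sup_eq_top, inf_top_eq]
      _ ≤ aᶜ ⊔ proj A (x ⊓ a) := sup_le_sup inf_le_right (le_proj _ _)
    have h2 : proj A x ≤ aᶜ ⊔ proj A (x ⊓ a) :=
      proj_le (hA.sup_mem (hA.2.1 a haA) (hA.proj_mem _)) h1
    calc proj A x ⊓ a ≤ (aᶜ ⊔ proj A (x ⊓ a)) ⊓ a := inf_le_inf_right a h2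
    _ = (aᶜ ⊓ a) ⊔ (proj A (x ⊓ a) ⊓ a) := by rw [inf_sup_right]
    _ ≤ proj A (x ⊓ a) := by simp
    
lemma proj_proj {Q A : Set B} (hsub : Q ⊆ A) (x : B) :
    proj Q (proj A x) = proj Q x := by
  apply le_antisymm
  · refine le_sInf (fun a ha => sInf_le ⟨ha.1, ?_⟩)
    exact proj_le (hsub ha.1) ha.2
  · exact proj_mono (le_proj A x)
section Aux
variable (S : Setting B)

lemma Setting.f_mono {a b : B} (ha : a ∈ S.B0) (hb : b ∈ S.B0) (h : a ≤ b) :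
    S.f a ≤ S.f b := by
  have h1 : S.f a ⊓ S.f b = S.f a := by rw [← S.f_inf a ha b hb, inf_eq_left.2 h]
  exact inf_eq_left.1 h1

lemma Setting.finv_mono {a b : B} (ha : a ∈ S.B1) (hb : b ∈ S.B1) (h : a ≤ b) :
    S.finv a ≤ S.finv b := by
  have h1 : S.f (S.finv a ⊓ S.finv b) = a ⊓ b := by
    rw [S.f_inf _ (S.finv_mem a ha) _ (S.finv_mem b hb), S.f_finv a ha, S.f_finv b hb]
  have h2 : S.finv a ⊓ S.finv b = S.finv (a ⊓ b) := by
    have h4 := congrArg S.finv h1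
    rwa [S.finv_f _ ((S.hB0).inf_mem (S.finv_mem a ha) (S.finv_mem b hb))] at h4
  have h3 : S.finv a ⊓ S.finv b = S.finv a := by rw [h2, inf_eq_left.2 h]
  exact inf_eq_left.1 h3

lemma Setting.F_mem (x : B) : S.F x ∈ S.B1 := S.f_mem _ ((S.hB0).proj_mem x)

lemma Setting.G_mem (x : B) : S.G x ∈ S.B0 := S.finv_mem _ ((S.hB1).proj_mem x)

lemma Setting.F_mono {x y : B} (h : x ≤ y) : S.F x ≤ S.F y :=
  S.f_mono ((S.hB0).proj_mem x) ((S.hB0).proj_mem y) (proj_mono h)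

lemma Setting.G_mono {x y : B} (h : x ≤ y) : S.G x ≤ S.G y :=
  S.finv_mono ((S.hB1).proj_mem x) ((S.hB1).proj_mem y) (proj_mono h)

lemma Setting.proj_F (x : B) : proj S.Q (S.F x) = proj S.Q x := by
  rw [Setting.F, S.f_proj _ ((S.hB0).proj_mem x), proj_proj S.hQB0]

lemma Setting.proj_G (x : B) : proj S.Q (S.G x) = proj S.Q x := by
  have h1 : S.f (S.G x) = proj S.B1 x := S.f_finv _ ((S.hB1).proj_mem x)
  have h2 := S.f_proj _ (S.G_mem x)
  rw [h1] at h2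
  rw [← h2, proj_proj S.hQB1]

lemma Setting.F_le_proj (x : B) : S.F x ≤ proj S.Q x := by
  have h := le_proj S.Q (S.F x); rwa [S.proj_F] at h

lemma Setting.G_le_proj (x : B) : S.G x ≤ proj S.Q x := by
  have h := le_proj S.Q (S.G x); rwa [S.proj_G] at h

end Aux

def cpos (S : Setting B) (pb : ℤ → B × B × B) (u : B) : ℕ → B
  | 0 => u
  | n + 1 => bm (pb (Int.ofNat (n + 1))) ⊓ S.F (cpos S pb u n)

def cneg (S : Setting B) (pb : ℤ → B × B × B) (u : B) : ℕ → B
  | 0 => u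
  | n + 1 => bm (pb (Int.negSucc n)) ⊓ S.G (cneg S pb u n)

def wbar (S : Setting B) (pb : ℤ → B × B × B) (w : B × B × B) : ℤ → B × B × B
  | Int.ofNat 0 => w
  | Int.ofNat (n + 1) => (proj S.Q w.1 ⊓ (pb (Int.ofNat (n + 1))).1,
      (pb (Int.ofNat (n + 1))).2.1,
      (pb (Int.ofNat (n + 1))).2.2 ⊓ S.F (cpos S pb (bm w) n))
  | Int.negSucc n => (proj S.Q w.1 ⊓ (pb (Int.negSucc n)).1,
      (pb (Int.negSucc n)).2.1 ⊓ S.G (cneg S pb (bm w) n),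
      (pb (Int.negSucc n)).2.2)

lemma negSucc_succ_add_one (n : ℕ) : Int.negSucc (n+1) + 1 = Int.negSucc n := by
  rw [Int.negSucc_eq, Int.negSucc_eq]; push_cast; ring
lemma negSucc_zero_add_one : Int.negSucc 0 + 1 = 0 := by decide
lemma ofNat_add_one (n : ℕ) : Int.ofNat n + 1 = Int.ofNat (n+1) := rfl

lemma wbar_zero (S : Setting B) (pb : ℤ → B × B × B) (w : B × B × B) :
    wbar S pb w 0 = w := rfl

lemma ofNat_succ_ne (n : ℕ) : (Int.ofNat (n+1)) ≠ 0 := by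
  rw [Int.ofNat_eq_natCast]; omega
lemma ofNat_succ_pos (n : ℕ) : (0:ℤ) < Int.ofNat (n+1) := by
  rw [Int.ofNat_eq_natCast]; omega

lemma e_pos (S : Setting B) (u : B × B × B) (n : ℕ) :
    S.e u (Int.ofNat (n+1)) = (proj S.Q u.1, ⊤, (S.F)^[n+1] (bm u)) := by
  show (if _ then _ else _) = _
  rw [if_neg (ofNat_succ_ne n), if_pos (ofNat_succ_pos n)]
  rfl

lemma e_neg (S : Setting B) (u : B × B × B) (n : ℕ) :
    S.e u (Int.negSucc n) = (proj S.Q u.1, (S.G)^[n+1] (bm u), ⊤) := by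
  have h1 : (Int.negSucc n) ≠ 0 := Int.negSucc_ne_zero n
  have h2 : ¬ (0:ℤ) < Int.negSucc n := by
    have hlt := Int.negSucc_lt_zero n; omega
  show (if _ then _ else _) = _
  rw [if_neg h1, if_neg h2]
  norm_num [Int.neg_negSucc]

lemma e_zero (S : Setting B) (u : B × B × B) : S.e u 0 = u := by simp [Setting.e]
lemma bm_mk1 (q a b c d : B) : bm (q ⊓ a, b, c ⊓ d) = q ⊓ (a ⊓ b ⊓ c ⊓ d) := by
  simp only [bm]; ac_rfl
lemma bm_mk2 (q a b c d : B) : bm (q ⊓ a, b ⊓ c, d) = q ⊓ (a ⊓ b ⊓ d ⊓ c) := by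
  simp only [bm]; ac_rfl

/-- Lemma 4.2: the zeroth-coordinate map is a strong projection
from the amalgamation onto the blowup: the meet `e(ŵ)·p̄` exists in `P^ℤ_f`
and its zeroth coordinate is `ŵ`. -/
theorem strong_projection_onto_blowup (S : Setting B)
    (h_meet : ∀ p ∈ S.P, ∀ q ∈ S.Q, q ≠ ⊥ → q ≤ proj S.Q p → q ⊓ p ∈ S.P)
    (h_Rmeet : ∀ p ∈ S.P, ∀ q, q ∈ S.Q → q ∈ S.P → q ≠ ⊥ → q ≤ proj S.Q p →
      S.R p (proj S.Q p) → S.R (q ⊓ p) q)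
    (pb : ℤ → B × B × B) (hpb : S.InAmalg pb)
    (w : B × B × B) (hw : S.InBlowup w) (hwle : bLE w (pb 0)) :
    ∃ wb : ℤ → B × B × B, S.InAmalg wb ∧ wb 0 = w ∧
      amLE wb pb ∧ amLE wb (S.e w) ∧
      ∀ rb : ℤ → B × B × B, S.InAmalg rb → amLE rb pb → amLE rb (S.e w) →
        amLE rb wb := by
  obtain ⟨hbl, hlink, hfin⟩ := hpb
  obtain ⟨hwP, hwB0, hwB1, hwproj⟩ := hw
  set q := proj S.Q w.1 with hqdef
  set cp := cpos S pb (bm w) with hcpdef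
  set cn := cneg S pb (bm w) with hcndef
  set W := wbar S pb w with hWdef
  have hcp0 : cp 0 = bm w := rfl
  have hcps : ∀ n, cp (n+1) = bm (pb (Int.ofNat (n+1))) ⊓ S.F (cp n) := fun _ => rfl
  have hcn0 : cn 0 = bm w := rfl
  have hcns : ∀ n, cn (n+1) = bm (pb (Int.negSucc n)) ⊓ S.G (cn n) := fun _ => rfl
  have hqQ : q ∈ S.Q := (S.hQ).proj_mem w.1
  have hwne : w.1 ≠ ⊥ := S.hPne w.1 hwP
  have hqne : q ≠ ⊥ := by
    intro h
    exact hwne (le_bot_iff.1 (h ▸ le_proj S.Q w.1))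
  have hqP : q ∈ S.P := S.R_proj_mem w.1 hwP
  have huproj : proj S.Q (bm w) = q := hwproj
  have hstep : ∀ k : ℤ, proj S.Q (bm (pb (k+1))) = proj S.Q (bm (pb k)) := by
    intro k
    calc proj S.Q (bm (pb (k+1))) = proj S.Q (proj S.B1 (bm (pb (k+1)))) :=
          (proj_proj S.hQB1 _).symm
    _ = proj S.Q (S.f (proj S.B0 (bm (pb k)))) := by rw [hlink k]
    _ = proj S.Q (proj S.B0 (bm (pb k))) := S.f_proj _ ((S.hB0).proj_mem _)
    _ = proj S.Q (bm (pb k)) := proj_proj S.hQB0 _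
  have hconst : ∀ k : ℤ, proj S.Q (bm (pb k)) = proj S.Q (bm (pb 0)) := by
    intro k
    induction k using Int.induction_on with
    | zero => rfl
    | succ i ih => rw [hstep (i : ℤ), ih]
    | pred i ih =>
      have h := hstep (-(i:ℤ) - 1)
      have e1 : (-(i:ℤ) - 1) + 1 = -(i:ℤ) := by ring
      rw [e1] at h
      rw [← h]
      exact ih
  have hqle : ∀ k : ℤ, q ≤ proj S.Q ((pb k).1) := by
    intro k
    have h0 : q ≤ proj S.Q ((pb 0).1) := proj_mono hwle.1
    have h1 : proj S.Q ((pb k).1) = proj S.Q ((pb 0).1) := by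
      rw [← (hbl k).2.2.2, ← (hbl 0).2.2.2, hconst k]
    rw [h1]; exact h0
  have hPk : ∀ k : ℤ, (pb k).1 ∈ S.P := fun k => (hbl k).1
  have hfirstP : ∀ k : ℤ, q ⊓ (pb k).1 ∈ S.P :=
    fun k => h_meet _ (hPk k) q hqQ hqne (hqle k)
  have hprojfst : ∀ k : ℤ, proj S.Q (q ⊓ (pb k).1) = q := by
    intro k
    rw [inf_comm q ((pb k).1), proj_inf S.hQ hqQ]
    exact inf_eq_right.2 (hqle k)
  -- positive chain
  have hLstep : ∀ n : ℕ, cp n ≤ bm (pb (Int.ofNat n)) →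
      S.f (proj S.B0 (cp n)) = proj S.B1 (cp (n+1)) := by
    intro n hle
    have hF1 : S.F (cp n) ∈ S.B1 := S.F_mem _
    have hFle : S.F (cp n) ≤ proj S.B1 (bm (pb (Int.ofNat (n+1)))) := by
      have h2 := hlink (Int.ofNat n)
      rw [ofNat_add_one] at h2
      calc S.F (cp n) ≤ S.F (bm (pb (Int.ofNat n))) := S.F_mono hle
      _ = proj S.B1 (bm (pb (Int.ofNat (n+1)))) := h2
    have h3 : proj S.B1 (cp (n+1)) = proj S.B1 (bm (pb (Int.ofNat (n+1)))) ⊓ S.F (cp n) := by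
      rw [hcps n, proj_inf S.hB1 hF1]
    rw [h3, inf_eq_right.2 hFle]
    rfl
  have Ppos : ∀ n : ℕ, proj S.Q (cp n) = q ∧ cp n ≤ bm (pb (Int.ofNat n)) := by
    intro n
    induction n with
    | zero => exact ⟨huproj, hwle.2⟩
    | succ n ih =>
      constructor
      · have hL := hLstep n ih.2
        calc proj S.Q (cp (n+1)) = proj S.Q (proj S.B1 (cp (n+1))) :=
              (proj_proj S.hQB1 _).symm
        _ = proj S.Q (S.f (proj S.B0 (cp n))) := by rw [hL]
        _ = proj S.Q (proj S.B0 (cp n)) := S.f_proj _ ((S.hB0).proj_mem _)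
        _ = proj S.Q (cp n) := proj_proj S.hQB0 _
        _ = q := ih.1
      · rw [hcps n]; exact inf_le_left
  have hLpos : ∀ n : ℕ, S.f (proj S.B0 (cp n)) = proj S.B1 (cp (n+1)) :=
    fun n => hLstep n (Ppos n).2
  -- negative chain
  have hLnstep : ∀ n : ℕ, cn n ≤ bm (pb (-(n:ℤ))) →
      S.f (proj S.B0 (cn (n+1))) = proj S.B1 (cn n) := by
    intro n hle
    have hG0 : S.G (cn n) ∈ S.B0 := S.G_mem _
    have h1 : proj S.B0 (cn (n+1)) = proj S.B0 (bm (pb (Int.negSucc n))) ⊓ S.G (cn n) := by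
      rw [hcns n, proj_inf S.hB0 hG0]
    have h2 := hlink (Int.negSucc n)
    have e1 : Int.negSucc n + 1 = -(n:ℤ) := by rw [Int.negSucc_eq]; ring
    rw [e1] at h2
    have h3 : S.f (S.G (cn n)) = proj S.B1 (cn n) := S.f_finv _ ((S.hB1).proj_mem _)
    rw [h1, S.f_inf _ ((S.hB0).proj_mem _) _ hG0, h2, h3,
      inf_eq_right.2 (proj_mono hle)]
  have Pneg : ∀ n : ℕ, proj S.Q (cn n) = q ∧ cn n ≤ bm (pb (-(n:ℤ))) := by
    intro n
    induction n with
    | zero => refine ⟨huproj, ?_⟩; norm_num; exact hwle.2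
    | succ n ih =>
      constructor
      · have hL := hLnstep n ih.2
        calc proj S.Q (cn (n+1)) = proj S.Q (proj S.B0 (cn (n+1))) :=
              (proj_proj S.hQB0 _).symm
        _ = proj S.Q (S.f (proj S.B0 (cn (n+1)))) :=
              (S.f_proj _ ((S.hB0).proj_mem _)).symm
        _ = proj S.Q (proj S.B1 (cn n)) := by rw [hL]
        _ = proj S.Q (cn n) := proj_proj S.hQB1 _
        _ = q := ih.1
      · have e : -(((n+1):ℕ):ℤ) = Int.negSucc n := by rw [Int.negSucc_eq]; push_cast; ring
        rw [e, hcns n]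
        exact inf_le_left
  have hLneg : ∀ n : ℕ, S.f (proj S.B0 (cn (n+1))) = proj S.B1 (cn n) :=
    fun n => hLnstep n (Pneg n).2
  have hcpq : ∀ n : ℕ, cp n ≤ q := fun n => (le_proj S.Q _).trans_eq (Ppos n).1
  have hcnq : ∀ n : ℕ, cn n ≤ q := fun n => (le_proj S.Q _).trans_eq (Pneg n).1
  -- bm of W
  have hbmWpos : ∀ n : ℕ, bm (W (Int.ofNat (n+1))) = cp (n+1) := by
    intro n
    have h1 : bm (W (Int.ofNat (n+1))) = q ⊓ cp (n+1) := by
      rw [hcps n]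
      exact bm_mk1 q _ _ _ _
    rw [h1]
    exact inf_eq_right.2 (hcpq (n+1))
  have hbmWneg : ∀ n : ℕ, bm (W (Int.negSucc n)) = cn (n+1) := by
    intro n
    have h1 : bm (W (Int.negSucc n)) = q ⊓ cn (n+1) := by
      rw [hcns n]
      exact bm_mk2 q _ _ _ _
    rw [h1]
    exact inf_eq_right.2 (hcnq (n+1))
  have hbmWof : ∀ n : ℕ, bm (W (Int.ofNat n)) = cp n := by
    intro n
    cases n with
    | zero => rfl
    | succ n => exact hbmWpos n
  have hbmWnegadd : ∀ n : ℕ, bm (W (Int.negSucc n + 1)) = cn n := by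
    intro n
    cases n with
    | zero => rw [negSucc_zero_add_one]; rfl
    | succ n => rw [negSucc_succ_add_one]; exact hbmWneg n
  have hWfst : ∀ k : ℤ, k ≠ 0 → (W k).1 = q ⊓ (pb k).1 := by
    intro k hk
    cases k with
    | ofNat n =>
      cases n with
      | zero => exact absurd rfl hk
      | succ n => rfl
    | negSucc n => rfl
  -- iterate bounds
  have hiterp : ∀ n : ℕ, cp n ≤ (S.F)^[n] (bm w) := by
    intro n
    induction n with
    | zero => exact le_rfl
    | succ n ih =>
      rw [Function.iterate_succ_apply', hcps n]
      exact le_trans inf_le_right (S.F_mono ih)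
  have hitern : ∀ n : ℕ, cn n ≤ (S.G)^[n] (bm w) := by
    intro n
    induction n with
    | zero => exact le_rfl
    | succ n ih =>
      rw [Function.iterate_succ_apply', hcns n]
      exact le_trans inf_le_right (S.G_mono ih)
  refine ⟨W, ⟨?_, ?_, ?_⟩, rfl, ?_, ?_, ?_⟩
  · -- InBlowup each coordinate
    intro k
    cases k with
    | ofNat n =>
      cases n with
      | zero => exact ⟨hwP, hwB0, hwB1, hwproj⟩
      | succ n =>
        refine ⟨hfirstP _, (hbl _).2.1,
          (S.hB1).inf_mem (hbl _).2.2.1 (S.F_mem _), ?_⟩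
        show proj S.Q (bm (W (Int.ofNat (n+1)))) = proj S.Q (q ⊓ (pb (Int.ofNat (n+1))).1)
        rw [hbmWpos n, (Ppos (n+1)).1, hprojfst]
    | negSucc n =>
      refine ⟨hfirstP _, (S.hB0).inf_mem (hbl _).2.1 (S.G_mem _),
        (hbl _).2.2.1, ?_⟩
      show proj S.Q (bm (W (Int.negSucc n))) = proj S.Q (q ⊓ (pb (Int.negSucc n)).1)
      rw [hbmWneg n, (Pneg (n+1)).1, hprojfst]
  · -- linking
    intro k
    cases k with
    | ofNat n =>
      rw [ofNat_add_one, hbmWof n, hbmWof (n+1)]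
      exact hLpos n
    | negSucc n =>
      rw [hbmWnegadd n, hbmWneg n]
      exact hLneg n
  · -- finiteness
    apply Set.Finite.subset (hfin.insert 0)
    intro k hk
    simp only [Set.mem_setOf_eq] at hk
    rcases eq_or_ne k 0 with h0 | h0
    · exact Set.mem_insert_iff.2 (Or.inl h0)
    · refine Set.mem_insert_iff.2 (Or.inr ?_)
      show ¬ S.R (pb k).1 (proj S.Q (pb k).1)
      intro hR
      apply hk
      have hfst := hWfst k h0
      rw [hfst, hprojfst k]
      exact h_Rmeet _ (hPk k) q hqQ hqP hqne (hqle k) hR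
  · -- amLE W pb
    intro k
    cases k with
    | ofNat n =>
      cases n with
      | zero => exact hwle
      | succ n =>
        refine ⟨inf_le_right, ?_⟩
        rw [hbmWpos n, hcps n]
        exact inf_le_left
    | negSucc n =>
      refine ⟨inf_le_right, ?_⟩
      rw [hbmWneg n, hcns n]
      exact inf_le_left
  · -- amLE W (e w)
    intro k
    cases k with
    | ofNat n =>
      cases n with
      | zero =>
        show bLE (W 0) (S.e w 0)
        rw [e_zero]
        exact ⟨le_rfl, le_rfl⟩
      | succ n =>
        rw [e_pos]
        refine ⟨inf_le_left, ?_⟩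
        rw [hbmWpos n]
        show cp (n+1) ≤ q ⊓ ⊤ ⊓ (S.F)^[n+1] (bm w)
        exact le_inf (le_inf (hcpq _) le_top) (hiterp (n+1))
    | negSucc n =>
      rw [e_neg]
      refine ⟨inf_le_left, ?_⟩
      rw [hbmWneg n]
      show cn (n+1) ≤ q ⊓ (S.G)^[n+1] (bm w) ⊓ ⊤
      exact le_inf (le_inf (hcnq _) (hitern (n+1))) le_top
  · -- maximality
    intro rb hrb hrp hre
    obtain ⟨hrbl, hrlink, hrfin⟩ := hrb
    have hre0 : bm (rb 0) ≤ bm w := by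
      have h := (hre 0).2
      rwa [e_zero] at h
    have Mpos : ∀ n : ℕ, bm (rb (Int.ofNat n)) ≤ cp n := by
      intro n
      induction n with
      | zero => exact hre0
      | succ n ih =>
        have hl := hrlink (Int.ofNat n)
        rw [ofNat_add_one] at hl
        have h1 : bm (rb (Int.ofNat (n+1))) ≤ S.f (proj S.B0 (bm (rb (Int.ofNat n)))) := by
          rw [hl]; exact le_proj _ _
        have h2 : S.f (proj S.B0 (bm (rb (Int.ofNat n)))) ≤ S.F (cp n) :=
          S.f_mono ((S.hB0).proj_mem _) ((S.hB0).proj_mem _) (proj_mono ih)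
        rw [hcps n]
        exact le_inf (hrp _).2 (h1.trans h2)
    have Mneg : ∀ n : ℕ, bm (rb (Int.negSucc n)) ≤ cn (n+1) := by
      intro n
      induction n with
      | zero =>
        have hl := hrlink (Int.negSucc 0)
        rw [negSucc_zero_add_one] at hl
        have h1 : proj S.B0 (bm (rb (Int.negSucc 0))) = S.finv (proj S.B1 (bm (rb 0))) := by
          rw [← hl, S.finv_f _ ((S.hB0).proj_mem _)]
        have h2 : S.finv (proj S.B1 (bm (rb 0))) ≤ S.G (bm w) :=
          S.finv_mono ((S.hB1).proj_mem _) ((S.hB1).proj_mem _) (proj_mono hre0)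
        have h3 : bm (rb (Int.negSucc 0)) ≤ S.G (bm w) :=
          (le_proj _ _).trans (h1 ▸ h2)
        rw [hcns 0]
        exact le_inf (hrp _).2 h3
      | succ n ih =>
        have hl := hrlink (Int.negSucc (n+1))
        rw [negSucc_succ_add_one] at hl
        have h1 : proj S.B0 (bm (rb (Int.negSucc (n+1)))) =
            S.finv (proj S.B1 (bm (rb (Int.negSucc n)))) := by
          rw [← hl, S.finv_f _ ((S.hB0).proj_mem _)]
        have h2 : S.finv (proj S.B1 (bm (rb (Int.negSucc n)))) ≤ S.G (cn (n+1)) :=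
          S.finv_mono ((S.hB1).proj_mem _) ((S.hB1).proj_mem _) (proj_mono ih)
        have h3 : bm (rb (Int.negSucc (n+1))) ≤ S.G (cn (n+1)) :=
          (le_proj _ _).trans (h1 ▸ h2)
        rw [hcns (n+1)]
        exact le_inf (hrp _).2 h3
    intro k
    cases k with
    | ofNat n =>
      cases n with
      | zero =>
        refine ⟨?_, Mpos 0⟩
        have h := (hre 0).1
        rwa [e_zero] at h
      | succ n =>
        refine ⟨?_, ?_⟩
        · have h := (hre (Int.ofNat (n+1))).1
          rw [e_pos] at h
          exact le_inf h (hrp _).1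
        · rw [hbmWpos n]
          exact Mpos (n+1)
    | negSucc n =>
      refine ⟨?_, ?_⟩
      · have h := (hre (Int.negSucc n)).1
        rw [e_neg] at h
        exact le_inf h (hrp _).1
      · rw [hbmWneg n]
        exact Mneg n

end Stmt7
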